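/- Let X be a finite connected simplicial complex, F a field of characteristic 0, and δ a cellular perversity. For every simplex Δ of X and every finite-dimensional F-vector space V, the global sections of the injective object [^δΔ]^V of R(X,−δ) satisfy Γ(X; [^δΔ]^V) = Hom_{R(X,−δ)}(𝐅, [^δΔ]^V) ≅ V, where 𝐅 is the constant object (Lemma 3.3.3). -/

import Mathlib

open CategoryTheory

structure SComplex (V : Type) [Fintype V] [DecidableEq V] where
  faces : Finset (Finset V)
  nonempty_of_mem : ∀ s ∈ faces, s.Nonempty
  down_closed : ∀ s ∈ faces, ∀ t, t ⊆ s → t.Nonempty → t ∈ faces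

namespace SComplex

variable {V : Type} [Fintype V] [DecidableEq V]

def Sim (K : SComplex V) : Type := {Δ : Finset V // Δ ∈ K.faces}

def dime (Δ : Finset V) : ℕ := Δ.card - 1

def Incident (Δ Δ' : Finset V) : Prop := Δ ⊆ Δ' ∨ Δ' ⊆ Δ

def Connected (K : SComplex V) : Prop :=
  ∀ Δ ∈ K.faces, ∀ Δ' ∈ K.faces,
    Relation.ReflTransGen (fun s t => s ∈ K.faces ∧ t ∈ K.faces ∧ (s ∩ t).Nonempty) Δ Δ'

def StepRel (K : SComplex V) (w : Finset V → ℤ) (Δ Δ' : Finset V) : Prop :=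
  Δ ∈ K.faces ∧ Δ' ∈ K.faces ∧ Incident Δ Δ' ∧ w Δ = w Δ' + 1

/-- `Δ ≥ Δ'` in the poset `Λ(X,w)`. -/
def lamGE (K : SComplex V) (w : Finset V → ℤ) (Δ Δ' : Finset V) : Prop :=
  Relation.ReflTransGen (StepRel K w) Δ Δ'

variable (F : Type) [Field F] [CharZero F]

/-- An object of the category `R(X,w)` of linear algebra data. -/
structure RObj (K : SComplex V) (w : Finset V → ℤ) where
  stalk : Sim K → ModuleCat F
  fd : ∀ Δ, Module.Finite F (stalk Δ)
  map : ∀ Δ Δ' : Sim K, Incident Δ.1 Δ'.1 → w Δ.1 = w Δ'.1 + 1 → (stalk Δ ⟶ stalk Δ')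
  equivAxiom : ∀ (Δ' Δ₁ Δ₂ Δ'' : Sim K)
    (h1 : Incident Δ'.1 Δ₁.1) (e1 : w Δ'.1 = w Δ₁.1 + 1)
    (h2 : Incident Δ₁.1 Δ''.1) (e2 : w Δ₁.1 = w Δ''.1 + 1)
    (h3 : Incident Δ'.1 Δ₂.1) (e3 : w Δ'.1 = w Δ₂.1 + 1)
    (h4 : Incident Δ₂.1 Δ''.1) (e4 : w Δ₂.1 = w Δ''.1 + 1),
    map Δ' Δ₁ h1 e1 ≫ map Δ₁ Δ'' h2 e2 = map Δ' Δ₂ h3 e3 ≫ map Δ₂ Δ'' h4 e4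

variable {F}

variable {K : SComplex V}

/-- The "constant sheaf" `𝐅` in `R(X,−δ)`: stalk `F` everywhere, all structure maps
the identity. -/
def constR (K : SComplex V) (w : Finset V → ℤ) : RObj F K w where
  stalk _ := ModuleCat.of F F
  fd _ := inferInstance
  map _ _ _ _ := ModuleCat.ofHom LinearMap.id
  equivAxiom := by intros; rfl

section Coideal

variable (K) (P : Finset V → ℤ)

/-- The object `[^δΔ]^V` of `R(X,−δ)`: stalk `V` at every simplex `Δ' ≤ Δ` in
`Λ(X,δ)` and `0` elsewhere, with all maps between copies of `V` the identity.
(The stalk at `Δ'` is realized as the space of functions from the proposition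
`Δ' ≤ Δ in Λ(X,δ)` to `V`.) -/
noncomputable def coideal (Δ : Sim K) (W : Type) [AddCommGroup W] [Module F W]
    [FiniteDimensional F W] : RObj F K (fun Δ₀ => -(P Δ₀)) where
  stalk Δ' := ModuleCat.of F (PLift (lamGE K P Δ.1 Δ'.1) → W)
  fd Δ' := by
    by_cases h : lamGE K P Δ.1 Δ'.1
    · haveI : Unique (PLift (lamGE K P Δ.1 Δ'.1)) := ⟨⟨⟨h⟩⟩, fun _ => rfl⟩
      exact Module.Finite.equiv
        (LinearEquiv.funUnique (PLift (lamGE K P Δ.1 Δ'.1)) F W).symm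
    · haveI : IsEmpty (PLift (lamGE K P Δ.1 Δ'.1)) := ⟨fun x => h x.down⟩
      infer_instance
  map α β hi hw :=
    ModuleCat.ofHom
    { toFun := fun f hβ => f ⟨Relation.ReflTransGen.tail hβ.down
        ⟨β.2, α.2, (by rcases hi with h | h; exact Or.inr h; exact Or.inl h),
          by omega⟩⟩
      map_add' := fun _ _ => rfl
      map_smul' := fun _ _ => rfl }
  equivAxiom := by intros; rfl

end Coideal

/-- The space of global sections `Γ(X;S) = Hom_{R(X,−δ)}(𝐅,S)`: the stalkwise linear
maps from the constant object commuting with the structure maps. -/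
def GammaSub {w : Finset V → ℤ} (S : RObj F K w) :
    Submodule F (∀ Δ : Sim K, ((constR K w : RObj F K w).stalk Δ →ₗ[F] S.stalk Δ)) where
  carrier := {h | ∀ (Δ Δ' : Sim K) (hi : Incident Δ.1 Δ'.1) (hw : w Δ.1 = w Δ'.1 + 1),
    (h Δ').comp ((constR K w : RObj F K w).map Δ Δ' hi hw).hom =
      (S.map Δ Δ' hi hw).hom.comp (h Δ)}
  add_mem' := by
    intro a b ha hb Δ Δ' hi hw
    simp only [Pi.add_apply, LinearMap.add_comp, LinearMap.comp_add]
    rw [ha Δ Δ' hi hw, hb Δ Δ' hi hw]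
  zero_mem' := by
    intro Δ Δ' hi hw
    simp
  smul_mem' := by
    intro c a ha Δ Δ' hi hw
    simp only [Pi.smul_apply, LinearMap.smul_comp, LinearMap.comp_smul]
    rw [ha Δ Δ' hi hw]

end SComplex

open SComplex

structure CellPerversity where
  d : ℕ → ℤ
  zero : d 0 = 0
  step : ∀ k : ℕ, 1 ≤ k →
    ((∀ i < k, d i < d k) ∧ (∃ i < k, d k = d i + 1)) ∨
    ((∀ i < k, d k < d i) ∧ (∃ i < k, d k = d i - 1))

def pd {V : Type} [Fintype V] [DecidableEq V] (P : CellPerversity) (Δ : Finset V) : ℤ :=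
  P.d (dime Δ)

/-- Lemma 3.3.3: for every simplex `Δ` of `X` and every finite-dimensional vector space
`W`, the global sections `Γ(X; [^δΔ]^W) = Hom_{R(X,−δ)}(𝐅, [^δΔ]^W)` of the injective
object `[^δΔ]^W` of `R(X,−δ)` are isomorphic to `W`. -/
theorem statement16 {V : Type} [Fintype V] [DecidableEq V] (F : Type) [Field F]
    [CharZero F] (K : SComplex V) (hne : K.faces.Nonempty) (hconn : K.Connected)
    (P : CellPerversity) (Δ : Sim K)
    (W : Type) [AddCommGroup W] [Module F W] [FiniteDimensional F W] :
    Nonempty ((GammaSub (F := F) (K := K)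
        (coideal (F := F) K (fun Δ₀ => pd P Δ₀) Δ W)) ≃ₗ[F] W) := by
  classical
  set S := coideal (F := F) K (fun Δ₀ => pd P Δ₀) Δ W with hS
  -- the unit of F viewed as an element of any stalk of the constant object
  let o : (ModuleCat.of F F) := (1 : F)
  -- key: any section is determined by its value at Δ on the trivial path
  have key : ∀ (g : GammaSub (F := F) (K := K) S)
      {b : Finset V} (p : Relation.ReflTransGen (StepRel K (fun Δ₀ => pd P Δ₀)) Δ.1 b)
      (hb : b ∈ K.faces),
      (g.1 ⟨b, hb⟩) o ⟨p⟩ = (g.1 Δ) o ⟨Relation.ReflTransGen.refl⟩ := by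
    intro g b p
    induction p with
    | refl => intro hb; rfl
    | @tail b c q s ih =>
      intro hc
      have hi : Incident c b := s.2.2.1.symm
      have hbc : pd P b = pd P c + 1 := s.2.2.2
      have hw : (fun Δ₀ => -(pd P Δ₀)) c = (fun Δ₀ => -(pd P Δ₀)) b + 1 := by
        show -(pd P c) = -(pd P b) + 1; omega
      have hstep := g.2 ⟨c, hc⟩ ⟨b, s.1⟩ hi hw
      have h2 := congrFun (LinearMap.congr_fun hstep o) ⟨q⟩
      have h3 : (g.1 ⟨c, hc⟩) o ⟨Relation.ReflTransGen.tail q s⟩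
          = (g.1 ⟨b, s.1⟩) o ⟨q⟩ := h2.symm
      rw [h3, ih s.1]
  -- evaluation map
  let ev : (GammaSub (F := F) (K := K) S) →ₗ[F] W :=
    { toFun := fun g => (g.1 Δ) o ⟨Relation.ReflTransGen.refl⟩
      map_add' := fun a b => rfl
      map_smul' := fun c a => rfl }
  have hval : ∀ (g : GammaSub (F := F) (K := K) S) (Δ' : Sim K) (x : F)
      (p : PLift (lamGE K (fun Δ₀ => pd P Δ₀) Δ.1 Δ'.1)),
      (g.1 Δ') x p = x • ((g.1 Δ) o ⟨Relation.ReflTransGen.refl⟩) := by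
    intro g Δ' x p
    have hx : (g.1 Δ') x = x • (g.1 Δ') o := by
      refine Eq.trans ?_ ((g.1 Δ').map_smul x o)
      congr 1
      show x = x * 1
      exact (mul_one x).symm
    have hkey : (g.1 Δ') o p = (g.1 Δ) o ⟨Relation.ReflTransGen.refl⟩ := by
      have h := key g p.down Δ'.2
      have hp : (⟨p.down⟩ : PLift (lamGE K (fun Δ₀ => pd P Δ₀) Δ.1 Δ'.1)) = p := rfl
      exact hp ▸ h
    calc (g.1 Δ') x p = (x • (g.1 Δ') o) p := by rw [hx]
      _ = x • ((g.1 Δ') o p) := rfl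
      _ = x • ((g.1 Δ) o ⟨Relation.ReflTransGen.refl⟩) := by rw [hkey]
  have hinj : Function.Injective ev := by
    intro a b hab
    have hab' : (a.1 Δ) o ⟨Relation.ReflTransGen.refl⟩
        = (b.1 Δ) o ⟨Relation.ReflTransGen.refl⟩ := hab
    apply Subtype.ext
    funext Δ'
    apply LinearMap.ext
    intro x
    funext p
    rw [hval a Δ' x p, hval b Δ' x p, hab']
  have hsurj : Function.Surjective ev := by
    intro v
    refine ⟨⟨fun Δ' => LinearMap.pi (fun _ => LinearMap.toSpanSingleton F W v), ?_⟩, ?_⟩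
    · intro α β hi hw
      apply LinearMap.ext
      intro x
      rfl
    · exact one_smul F v
  exact ⟨LinearEquiv.ofBijective ev ⟨hinj, hsurj⟩⟩
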